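/- Let α, C > 0 and let f : (0,1]² → ℝ be integrable and mixed α-Hölder with constant C with respect to the dyadic metrics. For j, j' ∈ ℕ, 0 ≤ k < 2^j, 0 ≤ k' < 2^{j'}, let ψ^j_k and ψ^{j'}_{k'} be the (unnormalized) Haar functions equal to +1 on the right half and −1 on the left half of the dyadic intervals I^j_k and I^{j'}_{k'} respectively, and 0 elsewhere, and let ψ^{j,j'}_{k,k'}(x,x') = ψ^j_k(x) · ψ^{j'}_{k'}(x') be the tensor Haar function. Then |∫_{(0,1]²} f(x,x') ψ^{j,j'}_{k,k'}(x,x') dx dx'| ≤ C · 2^{-αj} · 2^{-αj'} · 2^{-(j+1)} · 2^{-(j'+1)}. -/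

import Mathlib

open MeasureTheory Set Filter

/-- The index `k` of the scale-`j` dyadic interval `(2^{-j} k, 2^{-j}(k+1)]` containing `x`. -/
noncomputable def dyadicIndex (j : ℕ) (x : ℝ) : ℤ := ⌈(2:ℝ) ^ j * x⌉ - 1

/-- The scale-`j` dyadic interval `I^j_k = (2^{-j} k, 2^{-j}(k+1)]`. -/
noncomputable def dyadicInterval (j : ℕ) (k : ℤ) : Set ℝ :=
  Set.Ioc ((2:ℝ) ^ (-(j:ℤ)) * k) ((2:ℝ) ^ (-(j:ℤ)) * (k + 1))

/-- The dyadic averaging operator `P^j`:  `(P^j f)(x) = 2^j ∫_{I^j_k} f`, where `I^j_k` is the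
scale-`j` dyadic interval containing `x`. -/
noncomputable def dyadicAvg (j : ℕ) (f : ℝ → ℝ) (x : ℝ) : ℝ :=
  (2:ℝ) ^ j * ∫ t in dyadicInterval j (dyadicIndex j x), f t

/-- The dyadic metric on `(0,1]`:
`d(x,y) = inf { 2^{-j} : x and y lie in the same scale-j dyadic interval }` for `x ≠ y`,
and `d(x,x) = 0`. -/
noncomputable def dyadicDist (x y : ℝ) : ℝ :=
  if x = y then 0
  else sInf {r : ℝ | ∃ j : ℕ, r = (2:ℝ) ^ (-(j:ℤ)) ∧ dyadicIndex j x = dyadicIndex j y}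

/-- `f` is `α`-Hölder with constant `C` on `(0,1]` with respect to the dyadic metric. -/
def HolderDyadic (α C : ℝ) (f : ℝ → ℝ) : Prop :=
  ∀ x ∈ Set.Ioc (0:ℝ) 1, ∀ y ∈ Set.Ioc (0:ℝ) 1, |f x - f y| ≤ C * dyadicDist x y ^ α

/-- `g` is mixed `α`-Hölder with constant `C` on `(0,1]²` with respect to the dyadic metrics. -/
def MixedHolderDyadic (α C : ℝ) (g : ℝ → ℝ → ℝ) : Prop :=
  ∀ x ∈ Set.Ioc (0:ℝ) 1, ∀ y ∈ Set.Ioc (0:ℝ) 1, ∀ x' ∈ Set.Ioc (0:ℝ) 1, ∀ y' ∈ Set.Ioc (0:ℝ) 1,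
    |g y x' - g x x'| ≤ C * dyadicDist x y ^ α ∧
    |g x y' - g x x'| ≤ C * dyadicDist x' y' ^ α ∧
    |g y y' - g x y' - g y x' + g x x'| ≤ C * (dyadicDist x y ^ α * dyadicDist x' y' ^ α)

/-- Dyadic averaging at scale `j` in the first variable. -/
noncomputable def avgFst (j : ℕ) (g : ℝ → ℝ → ℝ) (x x' : ℝ) : ℝ := dyadicAvg j (fun t => g t x') x

/-- Dyadic averaging at scale `j'` in the second variable. -/
noncomputable def avgSnd (j' : ℕ) (g : ℝ → ℝ → ℝ) (x x' : ℝ) : ℝ := dyadicAvg j' (fun t => g x t) x'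

/-- The double averaging operator `P^j P'^{j'}`. -/
noncomputable def avg2 (j j' : ℕ) (g : ℝ → ℝ → ℝ) : ℝ → ℝ → ℝ := avgFst j (avgSnd j' g)

/-- The mixed martingale difference `Δ_j Δ'_{j'} g`. -/
noncomputable def mixedDiff (j j' : ℕ) (g : ℝ → ℝ → ℝ) (x x' : ℝ) : ℝ :=
  avg2 (j+1) (j'+1) g x x' - avg2 j (j'+1) g x x' - avg2 (j+1) j' g x x' + avg2 j j' g x x'

/-- `Δ_j P'^{j'} g`: martingale difference in the first variable, average in the second. -/
noncomputable def diffFstAvgSnd (j j' : ℕ) (g : ℝ → ℝ → ℝ) (x x' : ℝ) : ℝ :=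
  avg2 (j+1) j' g x x' - avg2 j j' g x x'

/-- `P^j Δ'_{j'} g`: average in the first variable, martingale difference in the second. -/
noncomputable def avgFstDiffSnd (j j' : ℕ) (g : ℝ → ℝ → ℝ) (x x' : ℝ) : ℝ :=
  avg2 j (j'+1) g x x' - avg2 j j' g x x'

/-- The (unnormalized) Haar function `ψ^j_k`: `+1` on the right half of `I^j_k`, `-1` on its
left half, `0` elsewhere. -/
noncomputable def haarFn (j : ℕ) (k : ℤ) (x : ℝ) : ℝ :=
  if x ∈ Set.Ioc ((2:ℝ) ^ (-(j:ℤ)) * k + (2:ℝ) ^ (-(j:ℤ) - 1)) ((2:ℝ) ^ (-(j:ℤ)) * (k + 1)) then 1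
  else if x ∈ Set.Ioc ((2:ℝ) ^ (-(j:ℤ)) * k) ((2:ℝ) ^ (-(j:ℤ)) * k + (2:ℝ) ^ (-(j:ℤ) - 1)) then -1
  else 0


/-! ### Auxiliary lemmas -/

lemma two_zpow_split (j : ℕ) :
    (2:ℝ) ^ (-(j:ℤ)) = (2:ℝ) ^ (-(j:ℤ)-1) + (2:ℝ) ^ (-(j:ℤ)-1) := by
  have h : (-(j:ℤ)) = (-(j:ℤ)-1) + 1 := by ring
  rw [h, zpow_add_one₀ (two_ne_zero)]
  ring

lemma dyadicIndex_eq_of_mem {j : ℕ} {k : ℤ} {x : ℝ}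
    (hx : x ∈ Set.Ioc ((2:ℝ) ^ (-(j:ℤ)) * k) ((2:ℝ) ^ (-(j:ℤ)) * (k + 1))) :
    dyadicIndex j x = k := by
  have h2 : (0:ℝ) < 2 ^ j := by positivity
  have hN : (2:ℝ) ^ (-(j:ℤ)) = ((2:ℝ) ^ j)⁻¹ := by
    rw [zpow_neg, zpow_natCast]
  rw [hN] at hx
  obtain ⟨hx1, hx2⟩ := hx
  have h1 : (k:ℝ) < 2 ^ j * x := by
    have h := mul_lt_mul_of_pos_left hx1 h2
    rwa [← mul_assoc, mul_inv_cancel₀ h2.ne', one_mul] at h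
  have h3 : 2 ^ j * x ≤ (k:ℝ) + 1 := by
    have h := mul_le_mul_of_nonneg_left hx2 h2.le
    rwa [← mul_assoc, mul_inv_cancel₀ h2.ne', one_mul] at h
  have hceil : ⌈(2:ℝ) ^ j * x⌉ = k + 1 := by
    rw [Int.ceil_eq_iff]
    constructor
    · push_cast; linarith
    · push_cast; linarith
  unfold dyadicIndex
  omega

lemma dyadicDist_nonneg (x y : ℝ) : 0 ≤ dyadicDist x y := by
  unfold dyadicDist
  split
  · exact le_refl 0
  · apply Real.sInf_nonneg
    rintro r ⟨m, rfl, -⟩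
    positivity

lemma dyadicDist_le {j : ℕ} {x y : ℝ} (h : dyadicIndex j x = dyadicIndex j y) :
    dyadicDist x y ≤ (2:ℝ) ^ (-(j:ℤ)) := by
  unfold dyadicDist
  split
  · positivity
  · apply csInf_le
    · exact ⟨0, by rintro r ⟨m, rfl, -⟩; positivity⟩
    · exact ⟨j, rfl, h⟩

lemma haarFn_apply_right {j : ℕ} {k : ℤ} {x : ℝ}
    (hx : x ∈ Set.Ioc ((2:ℝ) ^ (-(j:ℤ)) * k + (2:ℝ) ^ (-(j:ℤ) - 1)) ((2:ℝ) ^ (-(j:ℤ)) * (k + 1))) :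
    haarFn j k x = 1 := by
  rw [haarFn, if_pos hx]

lemma haarFn_apply_left {j : ℕ} {k : ℤ} {x : ℝ}
    (hx : x ∈ Set.Ioc ((2:ℝ) ^ (-(j:ℤ)) * k) ((2:ℝ) ^ (-(j:ℤ)) * k + (2:ℝ) ^ (-(j:ℤ) - 1))) :
    haarFn j k x = -1 := by
  rw [haarFn, if_neg, if_pos hx]
  rintro ⟨h1, h2⟩
  exact absurd hx.2 (not_le.2 h1)

lemma haarFn_eq_zero {j : ℕ} {k : ℤ} {x : ℝ}
    (hx : x ∉ Set.Ioc ((2:ℝ) ^ (-(j:ℤ)) * k) ((2:ℝ) ^ (-(j:ℤ)) * (k + 1))) :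
    haarFn j k x = 0 := by
  have hpos : (0:ℝ) < (2:ℝ) ^ (-(j:ℤ)-1) := by positivity
  have hsplit := two_zpow_split j
  rw [haarFn, if_neg, if_neg]
  · rintro ⟨h1, h2⟩
    exact hx ⟨h1, by nlinarith⟩
  · rintro ⟨h1, h2⟩
    refine hx ⟨by nlinarith, h2⟩

lemma abs_haarFn_le (j : ℕ) (k : ℤ) (x : ℝ) : |haarFn j k x| ≤ 1 := by
  rw [haarFn]
  split_ifs <;> norm_num

lemma measurable_haarFn (j : ℕ) (k : ℤ) : Measurable (haarFn j k) := by
  unfold haarFn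
  exact Measurable.ite measurableSet_Ioc measurable_const
    (Measurable.ite measurableSet_Ioc measurable_const measurable_const)

lemma rpow_two_zpow (α : ℝ) (j : ℕ) :
    ((2:ℝ) ^ (-(j:ℤ))) ^ α = (2:ℝ) ^ (-(α * (j:ℝ))) := by
  rw [← Real.rpow_intCast 2 (-(j:ℤ)), ← Real.rpow_mul (by norm_num : (0:ℝ) ≤ 2)]
  congr 1
  push_cast
  ring

lemma shift_setIntegral (F : ℝ × ℝ → ℝ) (c : ℝ × ℝ) (s : Set (ℝ × ℝ)) :
    ∫ p in (fun p : ℝ × ℝ => p + c) ⁻¹' s, F (p + c) = ∫ p in s, F p :=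
  (measurePreserving_add_right (volume : Measure (ℝ × ℝ)) c).setIntegral_preimage_emb
    (measurableEmbedding_addRight c) F s

lemma shift_integrableOn {F : ℝ × ℝ → ℝ} {s : Set (ℝ × ℝ)} (c : ℝ × ℝ)
    (hF : MeasureTheory.IntegrableOn F s) :
    MeasureTheory.IntegrableOn (fun p : ℝ × ℝ => F (p + c)) ((fun p : ℝ × ℝ => p + c) ⁻¹' s) :=
  ((measurePreserving_add_right (volume : Measure (ℝ × ℝ)) c).integrableOn_comp_preimage
    (measurableEmbedding_addRight c)).2 hF

/-- Left half of the scale-`j` dyadic interval. -/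
noncomputable def lhalf (j : ℕ) (k : ℤ) : Set ℝ :=
  Set.Ioc ((2:ℝ) ^ (-(j:ℤ)) * k) ((2:ℝ) ^ (-(j:ℤ)) * k + (2:ℝ) ^ (-(j:ℤ) - 1))

/-- Right half of the scale-`j` dyadic interval. -/
noncomputable def rhalf (j : ℕ) (k : ℤ) : Set ℝ :=
  Set.Ioc ((2:ℝ) ^ (-(j:ℤ)) * k + (2:ℝ) ^ (-(j:ℤ) - 1)) ((2:ℝ) ^ (-(j:ℤ)) * (k + 1))

lemma interval_expand (j : ℕ) (k : ℤ) :
    (2:ℝ) ^ (-(j:ℤ)) * ((k:ℝ) + 1)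
      = (2:ℝ) ^ (-(j:ℤ)) * (k:ℝ) + (2:ℝ) ^ (-(j:ℤ)-1) + (2:ℝ) ^ (-(j:ℤ)-1) := by
  rw [two_zpow_split j]; ring

lemma haarFn_left {j : ℕ} {k : ℤ} {x : ℝ} (hx : x ∈ lhalf j k) : haarFn j k x = -1 :=
  haarFn_apply_left hx

lemma haarFn_right {j : ℕ} {k : ℤ} {x : ℝ} (hx : x ∈ rhalf j k) : haarFn j k x = 1 :=
  haarFn_apply_right hx

lemma lhalf_subset_interval (j : ℕ) (k : ℤ) :
    lhalf j k ⊆ Set.Ioc ((2:ℝ) ^ (-(j:ℤ)) * k) ((2:ℝ) ^ (-(j:ℤ)) * (k + 1)) := by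
  have := interval_expand j k
  have hH : (0:ℝ) < (2:ℝ) ^ (-(j:ℤ)-1) := by positivity
  apply Set.Ioc_subset_Ioc le_rfl
  linarith

lemma rhalf_subset_interval (j : ℕ) (k : ℤ) :
    rhalf j k ⊆ Set.Ioc ((2:ℝ) ^ (-(j:ℤ)) * k) ((2:ℝ) ^ (-(j:ℤ)) * (k + 1)) := by
  have hH : (0:ℝ) < (2:ℝ) ^ (-(j:ℤ)-1) := by positivity
  apply Set.Ioc_subset_Ioc _ le_rfl
  linarith

lemma interval_subset_unit {j : ℕ} {k : ℕ} (hk : k < 2 ^ j) :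
    Set.Ioc ((2:ℝ) ^ (-(j:ℤ)) * ((k:ℤ):ℝ)) ((2:ℝ) ^ (-(j:ℤ)) * (((k:ℤ):ℝ) + 1))
      ⊆ Set.Ioc (0:ℝ) 1 := by
  have hA : (0:ℝ) < (2:ℝ) ^ (-(j:ℤ)) := by positivity
  have hk0 : (0:ℝ) ≤ ((k:ℤ):ℝ) := by positivity
  have hk1 : ((k:ℤ):ℝ) + 1 ≤ (2:ℝ) ^ j := by
    push_cast
    exact_mod_cast Nat.succ_le_of_lt hk
  apply Set.Ioc_subset_Ioc
  · positivity
  · calc (2:ℝ) ^ (-(j:ℤ)) * (((k:ℤ):ℝ) + 1) ≤ (2:ℝ) ^ (-(j:ℤ)) * (2:ℝ) ^ j :=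
        mul_le_mul_of_nonneg_left hk1 hA.le
    _ = 1 := by
        rw [zpow_neg, zpow_natCast, inv_mul_cancel₀ (by positivity)]

lemma sub_mem_lhalf {j : ℕ} {k : ℤ} {x : ℝ} (hx : x ∈ rhalf j k) :
    x - (2:ℝ) ^ (-(j:ℤ)-1) ∈ lhalf j k := by
  have he := interval_expand j k
  obtain ⟨h1, h2⟩ := hx
  exact ⟨by linarith, by linarith⟩

lemma dyadicDist_le_of_mem {j : ℕ} {k : ℤ} {x y : ℝ}
    (hx : x ∈ Set.Ioc ((2:ℝ) ^ (-(j:ℤ)) * k) ((2:ℝ) ^ (-(j:ℤ)) * (k + 1)))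
    (hy : y ∈ Set.Ioc ((2:ℝ) ^ (-(j:ℤ)) * k) ((2:ℝ) ^ (-(j:ℤ)) * (k + 1))) :
    dyadicDist x y ≤ (2:ℝ) ^ (-(j:ℤ)) :=
  dyadicDist_le (by rw [dyadicIndex_eq_of_mem hx, dyadicIndex_eq_of_mem hy])

lemma lhalf_disjoint_rhalf (j : ℕ) (k : ℤ) : Disjoint (lhalf j k) (rhalf j k) := by
  rw [Set.disjoint_left]
  intro x hx hx'
  exact absurd hx'.1 (not_lt.2 hx.2)

lemma measurableSet_lhalf (j : ℕ) (k : ℤ) : MeasurableSet (lhalf j k) := measurableSet_Ioc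
lemma measurableSet_rhalf (j : ℕ) (k : ℤ) : MeasurableSet (rhalf j k) := measurableSet_Ioc

lemma volume_rhalf (j : ℕ) (k : ℤ) :
    volume (rhalf j k) = ENNReal.ofReal ((2:ℝ) ^ (-(j:ℤ)-1)) := by
  rw [rhalf, Real.volume_Ioc]
  congr 1
  have := interval_expand j k
  linarith

/-- Tensor Haar coefficient decay: for `f` integrable and mixed `α`-Hölder
with constant `C`, `|∫_{(0,1]²} f ψ^{j,j'}_{k,k'}| ≤ C 2^{-αj} 2^{-αj'} 2^{-(j+1)} 2^{-(j'+1)}`. -/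
theorem tensor_haar_coefficient_decay
    (α C : ℝ) (hα : 0 < α) (hC : 0 < C)
    (f : ℝ → ℝ → ℝ)
    (hint : MeasureTheory.IntegrableOn (Function.uncurry f)
      (Set.Ioc (0:ℝ) 1 ×ˢ Set.Ioc (0:ℝ) 1))
    (hf : MixedHolderDyadic α C f)
    (j j' : ℕ) (k k' : ℕ) (hk : k < 2 ^ j) (hk' : k' < 2 ^ j') :
    |∫ p in Set.Ioc (0:ℝ) 1 ×ˢ Set.Ioc (0:ℝ) 1,
        f p.1 p.2 * haarFn j (k:ℤ) p.1 * haarFn j' (k':ℤ) p.2|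
      ≤ C * (2:ℝ) ^ (-(α * (j:ℝ))) * (2:ℝ) ^ (-(α * (j':ℝ)))
          * (2:ℝ) ^ (-(j:ℤ) - 1) * (2:ℝ) ^ (-(j':ℤ) - 1) := by
  classical
  have huf : Function.uncurry f = fun p : ℝ × ℝ => f p.1 p.2 := rfl
  have hHpos : (0:ℝ) < (2:ℝ) ^ (-(j:ℤ)-1) := by positivity
  have hH'pos : (0:ℝ) < (2:ℝ) ^ (-(j':ℤ)-1) := by positivity
  have hexp := interval_expand j (k:ℤ)
  have hexp' := interval_expand j' (k':ℤ)
  set S : Set (ℝ × ℝ) := Set.Ioc (0:ℝ) 1 ×ˢ Set.Ioc (0:ℝ) 1 with hS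
  set L : Set ℝ := lhalf j (k:ℤ) with hL
  set R : Set ℝ := rhalf j (k:ℤ) with hR
  set L' : Set ℝ := lhalf j' (k':ℤ) with hL'
  set R' : Set ℝ := rhalf j' (k':ℤ) with hR'
  set I : Set ℝ :=
    Set.Ioc ((2:ℝ) ^ (-(j:ℤ)) * ((k:ℤ):ℝ)) ((2:ℝ) ^ (-(j:ℤ)) * (((k:ℤ):ℝ) + 1)) with hI
  set I' : Set ℝ :=
    Set.Ioc ((2:ℝ) ^ (-(j':ℤ)) * ((k':ℤ):ℝ)) ((2:ℝ) ^ (-(j':ℤ)) * (((k':ℤ):ℝ) + 1)) with hI'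
  have hIu : I ⊆ Set.Ioc (0:ℝ) 1 := interval_subset_unit hk
  have hIu' : I' ⊆ Set.Ioc (0:ℝ) 1 := interval_subset_unit hk'
  have hLI : L ⊆ I := lhalf_subset_interval j (k:ℤ)
  have hRI : R ⊆ I := rhalf_subset_interval j (k:ℤ)
  have hLI' : L' ⊆ I' := lhalf_subset_interval j' (k':ℤ)
  have hRI' : R' ⊆ I' := rhalf_subset_interval j' (k':ℤ)
  have hLu : L ⊆ Set.Ioc (0:ℝ) 1 := hLI.trans hIu
  have hRu : R ⊆ Set.Ioc (0:ℝ) 1 := hRI.trans hIu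
  have hLu' : L' ⊆ Set.Ioc (0:ℝ) 1 := hLI'.trans hIu'
  have hRu' : R' ⊆ Set.Ioc (0:ℝ) 1 := hRI'.trans hIu'
  set g : ℝ × ℝ → ℝ := fun p => f p.1 p.2 * haarFn j (k:ℤ) p.1 * haarFn j' (k':ℤ) p.2 with hg
  -- integrability of g on S
  have hgm : AEStronglyMeasurable g (volume.restrict S) := by
    rw [hg]
    exact ((hint.aestronglyMeasurable).mul
        (((measurable_haarFn j (k:ℤ)).comp measurable_fst).aestronglyMeasurable)).mul
      (((measurable_haarFn j' (k':ℤ)).comp measurable_snd).aestronglyMeasurable)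
  have hgint : MeasureTheory.IntegrableOn g S := by
    refine Integrable.mono hint hgm (Filter.Eventually.of_forall fun p => ?_)
    simp only [hg, huf, Real.norm_eq_abs, abs_mul]
    have h1 := abs_haarFn_le j (k:ℤ) p.1
    have h2 := abs_haarFn_le j' (k':ℤ) p.2
    have h0 := abs_nonneg (f p.1 p.2)
    have h3 := abs_nonneg (haarFn j (k:ℤ) p.1)
    calc |f p.1 p.2| * |haarFn j (k:ℤ) p.1| * |haarFn j' (k':ℤ) p.2|
        ≤ |f p.1 p.2| * 1 * 1 :=
          mul_le_mul (mul_le_mul le_rfl h1 h3 h0) h2 (abs_nonneg _) (by positivity)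
      _ = |f p.1 p.2| := by ring
  -- Step A : restrict to I ×ˢ I'
  have stepA : ∫ p in S, g p = ∫ p in I ×ˢ I', g p := by
    refine setIntegral_eq_of_subset_of_forall_diff_eq_zero
      (measurableSet_Ioc.prod measurableSet_Ioc) (Set.prod_mono hIu hIu') ?_
    rintro ⟨x, y⟩ ⟨-, hnot⟩
    simp only [hg]
    by_cases hx : x ∈ I
    · have hy : y ∉ I' := fun hy => hnot ⟨hx, hy⟩
      rw [haarFn_eq_zero hy, mul_zero]
    · rw [haarFn_eq_zero hx, mul_zero, zero_mul]
  -- split into four quadrants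
  have hIun : I = L ∪ R := by
    rw [hI, hL, hR, lhalf, rhalf, Set.Ioc_union_Ioc_eq_Ioc (by linarith) (by linarith)]
  have hIun' : I' = L' ∪ R' := by
    rw [hI', hL', hR', lhalf, rhalf, Set.Ioc_union_Ioc_eq_Ioc (by linarith) (by linarith)]
  have hdLR : Disjoint L R := lhalf_disjoint_rhalf j (k:ℤ)
  have hdLR' : Disjoint L' R' := lhalf_disjoint_rhalf j' (k':ℤ)
  have hmL : MeasurableSet L := measurableSet_Ioc
  have hmR : MeasurableSet R := measurableSet_Ioc
  have hmL' : MeasurableSet L' := measurableSet_Ioc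
  have hmR' : MeasurableSet R' := measurableSet_Ioc
  have hintsub : ∀ {s : Set (ℝ × ℝ)}, s ⊆ S → MeasureTheory.IntegrableOn g s :=
    fun hs => hgint.mono_set hs
  have hsub : ∀ (X : Set ℝ) (Y : Set ℝ), X ⊆ Set.Ioc (0:ℝ) 1 → Y ⊆ Set.Ioc (0:ℝ) 1 →
      (X ×ˢ Y : Set (ℝ × ℝ)) ⊆ S := fun X Y hX hY => Set.prod_mono hX hY
  have stepB : ∫ p in I ×ˢ I', g p
      = (((∫ p in L ×ˢ L', g p) + ∫ p in L ×ˢ R', g p) + ∫ p in R ×ˢ L', g p)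
        + ∫ p in R ×ˢ R', g p := by
    rw [hIun, hIun', Set.union_prod, setIntegral_union
        (Set.Disjoint.set_prod_left hdLR _ _) (hmR.prod (hmL'.union hmR'))
        (hintsub (hsub _ _ hLu (hIun' ▸ hIu'))) (hintsub (hsub _ _ hRu (hIun' ▸ hIu'))),
      Set.prod_union, Set.prod_union,
      setIntegral_union (Set.Disjoint.set_prod_right hdLR' _ _) (hmL.prod hmR')
        (hintsub (hsub _ _ hLu hLu')) (hintsub (hsub _ _ hLu hRu')),
      setIntegral_union (Set.Disjoint.set_prod_right hdLR' _ _) (hmR.prod hmR')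
        (hintsub (hsub _ _ hRu hLu')) (hintsub (hsub _ _ hRu hRu'))]
    ring
  -- evaluate haar on each quadrant
  have eLL : ∫ p in L ×ˢ L', g p = ∫ p in L ×ˢ L', f p.1 p.2 := by
    refine setIntegral_congr_fun (hmL.prod hmL') ?_
    rintro ⟨x, y⟩ ⟨hx, hy⟩
    simp only [hg]
    rw [haarFn_left hx, haarFn_left hy]; ring
  have eLR : ∫ p in L ×ˢ R', g p = -∫ p in L ×ˢ R', f p.1 p.2 := by
    rw [← integral_neg]
    refine setIntegral_congr_fun (hmL.prod hmR') ?_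
    rintro ⟨x, y⟩ ⟨hx, hy⟩
    simp only [hg]
    rw [haarFn_left hx, haarFn_right hy]; ring
  have eRL : ∫ p in R ×ˢ L', g p = -∫ p in R ×ˢ L', f p.1 p.2 := by
    rw [← integral_neg]
    refine setIntegral_congr_fun (hmR.prod hmL') ?_
    rintro ⟨x, y⟩ ⟨hx, hy⟩
    simp only [hg]
    rw [haarFn_right hx, haarFn_left hy]; ring
  have eRR : ∫ p in R ×ˢ R', g p = ∫ p in R ×ˢ R', f p.1 p.2 := by
    refine setIntegral_congr_fun (hmR.prod hmR') ?_
    rintro ⟨x, y⟩ ⟨hx, hy⟩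
    simp only [hg]
    rw [haarFn_right hx, haarFn_right hy]; ring
  -- translations
  have hpre1 : (fun p : ℝ × ℝ => p + (-(2:ℝ) ^ (-(j:ℤ)-1), -(2:ℝ) ^ (-(j':ℤ)-1))) ⁻¹' (L ×ˢ L')
      = R ×ˢ R' := by
    ext ⟨x, y⟩
    simp only [Set.mem_preimage, Prod.mk_add_mk, Set.mem_prod, hL, hL', hR, hR', lhalf, rhalf,
      Set.mem_Ioc]
    constructor
    · rintro ⟨⟨h1, h2⟩, h3, h4⟩
      exact ⟨⟨by linarith, by linarith⟩, by linarith, by linarith⟩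
    · rintro ⟨⟨h1, h2⟩, h3, h4⟩
      exact ⟨⟨by linarith, by linarith⟩, by linarith, by linarith⟩
  have hpre2 : (fun p : ℝ × ℝ => p + (-(2:ℝ) ^ (-(j:ℤ)-1), (0:ℝ))) ⁻¹' (L ×ˢ R') = R ×ˢ R' := by
    ext ⟨x, y⟩
    simp only [Set.mem_preimage, Prod.mk_add_mk, Set.mem_prod, hL, hR, hR', lhalf, rhalf,
      Set.mem_Ioc, add_zero]
    constructor
    · rintro ⟨⟨h1, h2⟩, h3, h4⟩
      exact ⟨⟨by linarith, by linarith⟩, h3, h4⟩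
    · rintro ⟨⟨h1, h2⟩, h3, h4⟩
      exact ⟨⟨by linarith, by linarith⟩, h3, h4⟩
  have hpre3 : (fun p : ℝ × ℝ => p + ((0:ℝ), -(2:ℝ) ^ (-(j':ℤ)-1))) ⁻¹' (R ×ˢ L') = R ×ˢ R' := by
    ext ⟨x, y⟩
    simp only [Set.mem_preimage, Prod.mk_add_mk, Set.mem_prod, hR, hL', hR', lhalf, rhalf,
      Set.mem_Ioc, add_zero]
    constructor
    · rintro ⟨⟨h1, h2⟩, h3, h4⟩
      exact ⟨⟨h1, h2⟩, by linarith, by linarith⟩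
    · rintro ⟨⟨h1, h2⟩, h3, h4⟩
      exact ⟨⟨h1, h2⟩, by linarith, by linarith⟩
  have t1 : ∫ p in L ×ˢ L', f p.1 p.2
      = ∫ p in R ×ˢ R', f (p.1 - (2:ℝ) ^ (-(j:ℤ)-1)) (p.2 - (2:ℝ) ^ (-(j':ℤ)-1)) := by
    have h := shift_setIntegral (fun p : ℝ × ℝ => f p.1 p.2)
      (-(2:ℝ) ^ (-(j:ℤ)-1), -(2:ℝ) ^ (-(j':ℤ)-1)) (L ×ˢ L')
    rw [hpre1] at h
    rw [← h]
    refine setIntegral_congr_fun (hmR.prod hmR') fun p _ => ?_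
    simp [sub_eq_add_neg]
  have t2 : ∫ p in L ×ˢ R', f p.1 p.2
      = ∫ p in R ×ˢ R', f (p.1 - (2:ℝ) ^ (-(j:ℤ)-1)) p.2 := by
    have h := shift_setIntegral (fun p : ℝ × ℝ => f p.1 p.2)
      (-(2:ℝ) ^ (-(j:ℤ)-1), (0:ℝ)) (L ×ˢ R')
    rw [hpre2] at h
    rw [← h]
    refine setIntegral_congr_fun (hmR.prod hmR') fun p _ => ?_
    simp [sub_eq_add_neg]
  have t3 : ∫ p in R ×ˢ L', f p.1 p.2
      = ∫ p in R ×ˢ R', f p.1 (p.2 - (2:ℝ) ^ (-(j':ℤ)-1)) := by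
    have h := shift_setIntegral (fun p : ℝ × ℝ => f p.1 p.2)
      ((0:ℝ), -(2:ℝ) ^ (-(j':ℤ)-1)) (R ×ˢ L')
    rw [hpre3] at h
    rw [← h]
    refine setIntegral_congr_fun (hmR.prod hmR') fun p _ => ?_
    simp [sub_eq_add_neg]
  -- integrability of shifted functions on R ×ˢ R'
  have i4 : MeasureTheory.IntegrableOn (fun p : ℝ × ℝ => f p.1 p.2) (R ×ˢ R') :=
    hint.mono_set (hsub _ _ hRu hRu')
  have i1 : MeasureTheory.IntegrableOn
      (fun p : ℝ × ℝ => f (p.1 - (2:ℝ) ^ (-(j:ℤ)-1)) (p.2 - (2:ℝ) ^ (-(j':ℤ)-1))) (R ×ˢ R') := by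
    have h := shift_integrableOn (F := fun p : ℝ × ℝ => f p.1 p.2)
      (-(2:ℝ) ^ (-(j:ℤ)-1), -(2:ℝ) ^ (-(j':ℤ)-1)) (hint.mono_set (hsub _ _ hLu hLu'))
    rw [hpre1] at h
    refine h.congr_fun (fun p _ => ?_) (hmR.prod hmR')
    simp [sub_eq_add_neg]
  have i2 : MeasureTheory.IntegrableOn
      (fun p : ℝ × ℝ => f (p.1 - (2:ℝ) ^ (-(j:ℤ)-1)) p.2) (R ×ˢ R') := by
    have h := shift_integrableOn (F := fun p : ℝ × ℝ => f p.1 p.2)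
      (-(2:ℝ) ^ (-(j:ℤ)-1), (0:ℝ)) (hint.mono_set (hsub _ _ hLu hRu'))
    rw [hpre2] at h
    refine h.congr_fun (fun p _ => ?_) (hmR.prod hmR')
    simp [sub_eq_add_neg]
  have i3 : MeasureTheory.IntegrableOn
      (fun p : ℝ × ℝ => f p.1 (p.2 - (2:ℝ) ^ (-(j':ℤ)-1))) (R ×ˢ R') := by
    have h := shift_integrableOn (F := fun p : ℝ × ℝ => f p.1 p.2)
      ((0:ℝ), -(2:ℝ) ^ (-(j':ℤ)-1)) (hint.mono_set (hsub _ _ hRu hLu'))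
    rw [hpre3] at h
    refine h.congr_fun (fun p _ => ?_) (hmR.prod hmR')
    simp [sub_eq_add_neg]
  -- combine into a single integral
  have hcomb : ∫ p in S, g p = ∫ p in R ×ˢ R',
      (f (p.1 - (2:ℝ) ^ (-(j:ℤ)-1)) (p.2 - (2:ℝ) ^ (-(j':ℤ)-1))
        - f (p.1 - (2:ℝ) ^ (-(j:ℤ)-1)) p.2
        - f p.1 (p.2 - (2:ℝ) ^ (-(j':ℤ)-1)) + f p.1 p.2) := by
    have hsum : (∫ p in R ×ˢ R',
        (f (p.1 - (2:ℝ) ^ (-(j:ℤ)-1)) (p.2 - (2:ℝ) ^ (-(j':ℤ)-1))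
          - f (p.1 - (2:ℝ) ^ (-(j:ℤ)-1)) p.2
          - f p.1 (p.2 - (2:ℝ) ^ (-(j':ℤ)-1)) + f p.1 p.2))
        = (∫ p in R ×ˢ R', f (p.1 - (2:ℝ) ^ (-(j:ℤ)-1)) (p.2 - (2:ℝ) ^ (-(j':ℤ)-1)))
          - (∫ p in R ×ˢ R', f (p.1 - (2:ℝ) ^ (-(j:ℤ)-1)) p.2)
          - (∫ p in R ×ˢ R', f p.1 (p.2 - (2:ℝ) ^ (-(j':ℤ)-1)))
          + ∫ p in R ×ˢ R', f p.1 p.2 := by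
      have i12 : MeasureTheory.IntegrableOn
          (fun p : ℝ × ℝ => f (p.1 - (2:ℝ) ^ (-(j:ℤ)-1)) (p.2 - (2:ℝ) ^ (-(j':ℤ)-1))
            - f (p.1 - (2:ℝ) ^ (-(j:ℤ)-1)) p.2) (R ×ˢ R') := i1.sub i2
      have i123 : MeasureTheory.IntegrableOn
          (fun p : ℝ × ℝ => f (p.1 - (2:ℝ) ^ (-(j:ℤ)-1)) (p.2 - (2:ℝ) ^ (-(j':ℤ)-1))
            - f (p.1 - (2:ℝ) ^ (-(j:ℤ)-1)) p.2 - f p.1 (p.2 - (2:ℝ) ^ (-(j':ℤ)-1)))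
          (R ×ˢ R') := i12.sub i3
      have e1 := integral_sub i1 i2
      have e2 := integral_sub i12 i3
      have e3 := integral_add i123 i4
      beta_reduce at e1 e2 e3
      rw [e3, e2, e1]
    rw [stepA, stepB, eLL, eLR, eRL, eRR, t1, t2, t3, hsum]
    ring
  rw [hcomb]
  -- final bound
  have hvol : (volume (R ×ˢ R')).toReal = (2:ℝ) ^ (-(j:ℤ)-1) * (2:ℝ) ^ (-(j':ℤ)-1) := by
    rw [show (volume : Measure (ℝ × ℝ)) = (volume : Measure ℝ).prod volume from rfl,
      Measure.prod_prod, hR, hR', volume_rhalf, volume_rhalf, ← ENNReal.ofReal_mul hHpos.le,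
      ENNReal.toReal_ofReal (by positivity)]
  have hb : ∀ p ∈ R ×ˢ R',
      ‖f (p.1 - (2:ℝ) ^ (-(j:ℤ)-1)) (p.2 - (2:ℝ) ^ (-(j':ℤ)-1))
        - f (p.1 - (2:ℝ) ^ (-(j:ℤ)-1)) p.2
        - f p.1 (p.2 - (2:ℝ) ^ (-(j':ℤ)-1)) + f p.1 p.2‖
      ≤ C * (2:ℝ) ^ (-(α * (j:ℝ))) * (2:ℝ) ^ (-(α * (j':ℝ))) := by
    rintro ⟨x, y⟩ ⟨hx, hy⟩
    have hxL : x - (2:ℝ) ^ (-(j:ℤ)-1) ∈ L := sub_mem_lhalf hx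
    have hyL : y - (2:ℝ) ^ (-(j':ℤ)-1) ∈ L' := sub_mem_lhalf hy
    have hd1 : dyadicDist (x - (2:ℝ) ^ (-(j:ℤ)-1)) x ≤ (2:ℝ) ^ (-(j:ℤ)) :=
      dyadicDist_le_of_mem (hLI hxL) (hRI hx)
    have hd2 : dyadicDist (y - (2:ℝ) ^ (-(j':ℤ)-1)) y ≤ (2:ℝ) ^ (-(j':ℤ)) :=
      dyadicDist_le_of_mem (hLI' hyL) (hRI' hy)
    have key := (hf (x - (2:ℝ) ^ (-(j:ℤ)-1)) (hLu hxL) x (hRu hx)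
      (y - (2:ℝ) ^ (-(j':ℤ)-1)) (hLu' hyL) y (hRu' hy)).2.2
    have hr1 : dyadicDist (x - (2:ℝ) ^ (-(j:ℤ)-1)) x ^ α ≤ (2:ℝ) ^ (-(α * (j:ℝ))) := by
      rw [← rpow_two_zpow α j]
      exact Real.rpow_le_rpow (dyadicDist_nonneg _ _) hd1 hα.le
    have hr2 : dyadicDist (y - (2:ℝ) ^ (-(j':ℤ)-1)) y ^ α ≤ (2:ℝ) ^ (-(α * (j':ℝ))) := by
      rw [← rpow_two_zpow α j']
      exact Real.rpow_le_rpow (dyadicDist_nonneg _ _) hd2 hα.le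
    have hn1 : 0 ≤ dyadicDist (x - (2:ℝ) ^ (-(j:ℤ)-1)) x ^ α :=
      Real.rpow_nonneg (dyadicDist_nonneg _ _) α
    have hn2 : 0 ≤ dyadicDist (y - (2:ℝ) ^ (-(j':ℤ)-1)) y ^ α :=
      Real.rpow_nonneg (dyadicDist_nonneg _ _) α
    have hrr : (0:ℝ) ≤ (2:ℝ) ^ (-(α * (j:ℝ))) := (Real.rpow_pos_of_pos two_pos _).le
    calc ‖f (x - (2:ℝ) ^ (-(j:ℤ)-1)) (y - (2:ℝ) ^ (-(j':ℤ)-1))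
          - f (x - (2:ℝ) ^ (-(j:ℤ)-1)) y - f x (y - (2:ℝ) ^ (-(j':ℤ)-1)) + f x y‖
        = |f x y - f (x - (2:ℝ) ^ (-(j:ℤ)-1)) y - f x (y - (2:ℝ) ^ (-(j':ℤ)-1))
            + f (x - (2:ℝ) ^ (-(j:ℤ)-1)) (y - (2:ℝ) ^ (-(j':ℤ)-1))| := by
          rw [Real.norm_eq_abs]; congr 1; ring
      _ ≤ C * (dyadicDist (x - (2:ℝ) ^ (-(j:ℤ)-1)) x ^ α
            * dyadicDist (y - (2:ℝ) ^ (-(j':ℤ)-1)) y ^ α) := key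
      _ ≤ C * ((2:ℝ) ^ (-(α * (j:ℝ))) * (2:ℝ) ^ (-(α * (j':ℝ)))) := by
          apply mul_le_mul_of_nonneg_left _ hC.le
          exact mul_le_mul hr1 hr2 hn2 hrr
      _ = C * (2:ℝ) ^ (-(α * (j:ℝ))) * (2:ℝ) ^ (-(α * (j':ℝ))) := by ring
  have hfin : volume (R ×ˢ R') < ⊤ := by
    rw [show (volume : Measure (ℝ × ℝ)) = (volume : Measure ℝ).prod volume from rfl,
      Measure.prod_prod, hR, hR', volume_rhalf, volume_rhalf]
    exact ENNReal.mul_lt_top ENNReal.ofReal_lt_top ENNReal.ofReal_lt_top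
  have := norm_setIntegral_le_of_norm_le_const hfin hb
  rw [Real.norm_eq_abs, measureReal_def, hvol] at this
  calc |∫ p in R ×ˢ R',
      (f (p.1 - (2:ℝ) ^ (-(j:ℤ)-1)) (p.2 - (2:ℝ) ^ (-(j':ℤ)-1))
        - f (p.1 - (2:ℝ) ^ (-(j:ℤ)-1)) p.2
        - f p.1 (p.2 - (2:ℝ) ^ (-(j':ℤ)-1)) + f p.1 p.2)|
      ≤ C * (2:ℝ) ^ (-(α * (j:ℝ))) * (2:ℝ) ^ (-(α * (j':ℝ)))
          * ((2:ℝ) ^ (-(j:ℤ)-1) * (2:ℝ) ^ (-(j':ℤ)-1)) := this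
    _ = C * (2:ℝ) ^ (-(α * (j:ℝ))) * (2:ℝ) ^ (-(α * (j':ℝ)))
          * (2:ℝ) ^ (-(j:ℤ) - 1) * (2:ℝ) ^ (-(j':ℤ) - 1) := by ring
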